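/- Let θ = (k_r) be a lacunary sequence. The set of statistically quasi-Cauchy sequences coincides with the set of lacunarily statistically quasi-Cauchy sequences (with respect to θ) if and only if 1 < liminf_r k_r/k_{r-1} and limsup_r k_r/k_{r-1} < ∞. -/

import Mathlib

open Filter Finset Topology

open scoped Classical

/-- A sequence `x` converges statistically to `ℓ`. -/
def StatConvTo (x : ℕ → ℝ) (ℓ : ℝ) : Prop :=
  ∀ ε > 0, Tendsto (fun n : ℕ =>
      ((((Finset.range n).filter fun k => ε ≤ |x k - ℓ|).card : ℝ) / (n : ℝ)))
    atTop (𝓝 0)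

/-- A sequence is statistically quasi-Cauchy if its difference sequence
converges statistically to `0`. -/
def StatQC (a : ℕ → ℝ) : Prop :=
  StatConvTo (fun n => a (n + 1) - a n) 0

/-- A lacunary sequence `θ = (k_r)`: strictly increasing, `k 0 = 0`,
and `h_r = k_{r+1} - k_r → ∞`. -/
structure Lacunary where
  k : ℕ → ℕ
  strictMono : StrictMono k
  zero : k 0 = 0
  h_tendsto : Tendsto (fun r => k (r + 1) - k r) atTop atTop

/-- Lacunary statistical convergence of `x` to `ℓ` with respect to `θ`. -/
def LacStatConvTo (θ : Lacunary) (x : ℕ → ℝ) (ℓ : ℝ) : Prop :=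
  ∀ ε > 0, Tendsto (fun r : ℕ =>
      ((((Finset.Ioc (θ.k r) (θ.k (r + 1))).filter fun i => ε ≤ |x i - ℓ|).card : ℝ)
        / ((θ.k (r + 1) - θ.k r : ℕ) : ℝ)))
    atTop (𝓝 0)

/-- A sequence is lacunarily statistically quasi-Cauchy (w.r.t. `θ`). -/
def LacStatQC (θ : Lacunary) (a : ℕ → ℝ) : Prop :=
  LacStatConvTo θ (fun n => a (n + 1) - a n) 0

/-- `liminf q_r > 1` where `q_r = k_{r+1} / k_r`. -/
def LiminfQGtOne (θ : Lacunary) : Prop :=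
  ∃ a : ℝ, 1 < a ∧ ∀ᶠ r in atTop, a ≤ (θ.k (r + 1) : ℝ) / (θ.k r : ℝ)

/-- `limsup q_r < ∞` where `q_r = k_{r+1} / k_r`. -/
def LimsupQLtTop (θ : Lacunary) : Prop :=
  ∃ H : ℝ, ∀ᶠ r in atTop, (θ.k (r + 1) : ℝ) / (θ.k r : ℝ) ≤ H

/-- `A` is lacunarily statistically ward compact w.r.t. `θ`. -/
def LacStatWardCompact (θ : Lacunary) (A : Set ℝ) : Prop :=
  ∀ x : ℕ → ℝ, (∀ n, x n ∈ A) →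
    ∃ φ : ℕ → ℕ, StrictMono φ ∧ LacStatQC θ (x ∘ φ)

/-- `f` is lacunarily statistically ward continuous on `A` w.r.t. `θ`. -/
def LacStatWardContOn (θ : Lacunary) (f : ℝ → ℝ) (A : Set ℝ) : Prop :=
  ∀ x : ℕ → ℝ, (∀ n, x n ∈ A) → LacStatQC θ x → LacStatQC θ (f ∘ x)

namespace LacAux

lemma k_mono (θ : Lacunary) : Monotone θ.k := θ.strictMono.monotone

lemma k_ge (θ : Lacunary) (r : ℕ) : r ≤ θ.k r := θ.strictMono.le_apply

lemma h_pos (θ : Lacunary) (r : ℕ) : 0 < θ.k (r + 1) - θ.k r :=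
  Nat.sub_pos_of_lt (θ.strictMono (Nat.lt_succ_self r))

/-- the intervals `Ioc (k r) (k (r+1))` are pairwise disjoint -/
lemma Ioc_disj (θ : Lacunary) {a b i : ℕ} (ha : i ∈ Finset.Ioc (θ.k a) (θ.k (a + 1)))
    (hb : i ∈ Finset.Ioc (θ.k b) (θ.k (b + 1))) : a = b := by
  simp only [Finset.mem_Ioc] at ha hb
  rcases lt_trichotomy a b with h | h | h
  · exact absurd (lt_of_le_of_lt (ha.2.trans (k_mono θ h)) hb.1) (lt_irrefl i)
  · exact h
  · exact absurd (lt_of_le_of_lt (hb.2.trans (k_mono θ h)) ha.1) (lt_irrefl i)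

/-- telescoping sum of block lengths -/
lemma sum_h (θ : Lacunary) (m : ℕ) :
    ∑ j ∈ Finset.range m, (θ.k (j + 1) - θ.k j) = θ.k m := by
  induction m with
  | zero => simp [θ.zero]
  | succ m ih =>
      rw [Finset.sum_range_succ, ih, Nat.add_sub_cancel' (k_mono θ (Nat.le_succ m))]

lemma P1 (θ : Lacunary) (hL : LiminfQGtOne θ) (x : ℕ → ℝ) (hx : StatConvTo x 0) :
    LacStatConvTo θ x 0 := by
  obtain ⟨a, ha1, ha⟩ := hL
  intro ε hε
  have hC := hx ε hε
  set M : ℝ := a / (a - 1) + 1 with hM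
  have hcomp : Tendsto (fun r : ℕ => θ.k (r + 1) + 1) atTop atTop := by
    apply tendsto_atTop_mono (fun r => ?_) tendsto_id
    have := k_ge θ (r + 1); simp only [id_eq]; omega
  have hg : Tendsto (fun r : ℕ =>
      M * ((((Finset.range (θ.k (r + 1) + 1)).filter fun k => ε ≤ |x k - 0|).card : ℝ)
        / ((θ.k (r + 1) + 1 : ℕ) : ℝ))) atTop (𝓝 0) := by
    have := (hC.comp hcomp).const_mul M
    simpa using this
  apply squeeze_zero' (Eventually.of_forall fun r => by positivity) _ hg
  filter_upwards [ha, eventually_ge_atTop 1] with r hq hr1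
  have hkr1 : 1 ≤ θ.k r := le_trans hr1 (k_ge θ r)
  have hkrpos : (0:ℝ) < (θ.k r : ℝ) := by exact_mod_cast hkr1
  rw [le_div_iff₀ hkrpos] at hq
  have hcard : ((Finset.Ioc (θ.k r) (θ.k (r + 1))).filter fun i => ε ≤ |x i - 0|).card ≤
      ((Finset.range (θ.k (r + 1) + 1)).filter fun k => ε ≤ |x k - 0|).card := by
    apply Finset.card_le_card
    apply Finset.filter_subset_filter
    intro i hi
    exact Finset.mem_range.2 (Nat.lt_succ_of_le (Finset.mem_Ioc.1 hi).2)
  have hhR : ((θ.k (r + 1) - θ.k r : ℕ) : ℝ) = (θ.k (r + 1) : ℝ) - (θ.k r : ℝ) :=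
    Nat.cast_sub (k_mono θ (Nat.le_succ r))
  have hh1 : (1:ℝ) ≤ ((θ.k (r + 1) - θ.k r : ℕ) : ℝ) := by exact_mod_cast h_pos θ r
  have hNle : ((θ.k (r + 1) + 1 : ℕ) : ℝ) ≤ M * ((θ.k (r + 1) - θ.k r : ℕ) : ℝ) := by
    rw [hhR] at hh1 ⊢
    have haa : (0:ℝ) < a - 1 := by linarith
    have hMa : M * (a - 1) = 2 * a - 1 := by rw [hM]; field_simp; ring
    push_cast
    nlinarith [mul_nonneg (le_of_lt haa) (sub_nonneg.2 hh1),
      mul_le_mul_of_nonneg_left hq (le_of_lt haa)]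
  rw [mul_div_assoc'] -- M * (c/N) = M*c/N
  rw [div_le_div_iff₀ (by linarith) (by positivity)]
  calc ((((Finset.Ioc (θ.k r) (θ.k (r + 1))).filter fun i => ε ≤ |x i - 0|).card : ℝ)) *
        ((θ.k (r + 1) + 1 : ℕ) : ℝ)
      ≤ (((Finset.range (θ.k (r + 1) + 1)).filter fun k => ε ≤ |x k - 0|).card : ℝ) *
        (M * ((θ.k (r + 1) - θ.k r : ℕ) : ℝ)) := by
        apply mul_le_mul (by exact_mod_cast hcard) hNle (by positivity) (by positivity)
    _ = M * (((Finset.range (θ.k (r + 1) + 1)).filter fun k => ε ≤ |x k - 0|).card : ℝ) *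
        ((θ.k (r + 1) - θ.k r : ℕ) : ℝ) := by ring

lemma card_blocks (θ : Lacunary) (P : ℕ → Prop) [DecidablePred P] (m : ℕ) :
    ((Finset.Ioc (θ.k 0) (θ.k m)).filter P).card ≤
      ∑ j ∈ Finset.range m, ((Finset.Ioc (θ.k j) (θ.k (j + 1))).filter P).card := by
  induction m with
  | zero => simp
  | succ m ih =>
      rw [Finset.sum_range_succ,
        ← Finset.Ioc_union_Ioc_eq_Ioc (k_mono θ (Nat.zero_le m)) (k_mono θ (Nat.le_succ m)),
        Finset.filter_union]
      exact le_trans (Finset.card_union_le _ _) (by simp only [Nat.succ_eq_add_one]; omega)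

lemma P2 (θ : Lacunary) (hH : LimsupQLtTop θ) (x : ℕ → ℝ) (hx : LacStatConvTo θ x 0) :
    StatConvTo x 0 := by
  obtain ⟨H0, hH0⟩ := hH
  set H : ℝ := max H0 1 with hHdef
  have hH1 : (1:ℝ) ≤ H := le_max_right _ _
  have hHev : ∀ᶠ r in atTop, (θ.k (r + 1) : ℝ) / (θ.k r : ℝ) ≤ H :=
    hH0.mono fun r h => le_trans h (le_max_left _ _)
  obtain ⟨R1, hR1⟩ := eventually_atTop.1 hHev
  intro ε hε
  rw [NormedAddCommGroup.tendsto_nhds_zero]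
  intro δ hδ
  set δ' : ℝ := δ / (2 * H) with hδ'def
  have hδ' : 0 < δ' := by positivity
  have hB := (NormedAddCommGroup.tendsto_nhds_zero.mp (hx ε hε)) δ' hδ'
  obtain ⟨R0, hR0⟩ := eventually_atTop.1 hB
  -- B j ≤ δ' * h j for j ≥ R0
  have hBle : ∀ j, R0 ≤ j →
      (((Finset.Ioc (θ.k j) (θ.k (j + 1))).filter fun i => ε ≤ |x i - 0|).card : ℝ) ≤
        δ' * ((θ.k (j + 1) - θ.k j : ℕ) : ℝ) := by
    intro j hj
    have h2 := hR0 j hj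
    have hpos : (0:ℝ) < ((θ.k (j + 1) - θ.k j : ℕ) : ℝ) := by exact_mod_cast h_pos θ j
    rw [Real.norm_eq_abs, abs_of_nonneg (by positivity), div_lt_iff₀ hpos] at h2
    linarith
  set R : ℕ := max R0 (max R1 1) with hRdef
  set S0 : ℝ := ∑ j ∈ Finset.range R,
    (((Finset.Ioc (θ.k j) (θ.k (j + 1))).filter fun i => ε ≤ |x i - 0|).card : ℝ) with hS0def
  have hS0nn : 0 ≤ S0 := Finset.sum_nonneg fun j _ => by positivity
  have htend : Tendsto (fun n : ℕ => (1 + S0) / (n : ℝ)) atTop (𝓝 0) :=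
    tendsto_const_div_atTop_nhds_zero_nat _
  have hev2 : ∀ᶠ n : ℕ in atTop, (1 + S0) / (n : ℝ) < δ / 2 :=
    htend.eventually_lt_const (by positivity)
  filter_upwards [eventually_gt_atTop (θ.k (R + 1)), hev2] with n hn1 hn2
  have hnpos : 0 < n := lt_of_le_of_lt (Nat.zero_le _) hn1
  have hnRpos : 0 < n := hnpos
  -- find r with k r < n ≤ k (r+1)
  have hex : ∃ m, n ≤ θ.k m := ⟨n, k_ge θ n⟩
  have hm := Nat.find_spec hex
  have hm0 : Nat.find hex ≠ 0 := by
    intro h0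
    rw [h0, θ.zero] at hm
    omega
  obtain ⟨r, hr⟩ := Nat.exists_eq_succ_of_ne_zero hm0
  have hkrn : θ.k r < n := by
    have := Nat.find_min hex (m := r) (by omega)
    omega
  have hnkr1 : n ≤ θ.k (r + 1) := by rw [hr] at hm; exact hm
  have hRr : R ≤ r := by
    have : R + 1 < r + 1 + 1 := by
      have hkk : θ.k (R + 1) < θ.k (r + 1) := lt_of_lt_of_le hn1 hnkr1
      have := θ.strictMono.lt_iff_lt.mp hkk
      omega
    omega
  -- counting
  have hsub : (Finset.range n).filter (fun i => ε ≤ |x i - 0|) ⊆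
      insert 0 ((Finset.Ioc (θ.k 0) (θ.k (r + 1))).filter fun i => ε ≤ |x i - 0|) := by
    intro i hi
    rw [Finset.mem_filter, Finset.mem_range] at hi
    rcases Nat.eq_zero_or_pos i with h | h
    · exact Finset.mem_insert.2 (Or.inl h)
    · refine Finset.mem_insert.2 (Or.inr ?_)
      rw [Finset.mem_filter, Finset.mem_Ioc, θ.zero]
      exact ⟨⟨h, le_trans (Nat.le_of_lt_succ (Nat.lt_succ_of_lt hi.1)) hnkr1⟩, hi.2⟩
  have hcount : (((Finset.range n).filter fun i => ε ≤ |x i - 0|).card : ℝ) ≤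
      1 + ∑ j ∈ Finset.range (r + 1),
        (((Finset.Ioc (θ.k j) (θ.k (j + 1))).filter fun i => ε ≤ |x i - 0|).card : ℝ) := by
    have h1 := Finset.card_le_card hsub
    have h2 := Finset.card_insert_le 0 ((Finset.Ioc (θ.k 0) (θ.k (r + 1))).filter fun i => ε ≤ |x i - 0|)
    have h3 := card_blocks θ (fun i => ε ≤ |x i - 0|) (r + 1)
    have h5 := h1.trans (h2.trans (Nat.succ_le_succ h3))
    have h6 : ((Finset.range n).filter fun i => ε ≤ |x i - 0|).card ≤
        1 + ∑ j ∈ Finset.range (r + 1),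
          ((Finset.Ioc (θ.k j) (θ.k (j + 1))).filter fun i => ε ≤ |x i - 0|).card := by omega
    exact_mod_cast h6
  -- split the sum
  have hsplit : ∑ j ∈ Finset.range (r + 1),
      (((Finset.Ioc (θ.k j) (θ.k (j + 1))).filter fun i => ε ≤ |x i - 0|).card : ℝ) =
      S0 + ∑ j ∈ Finset.Ico R (r + 1),
      (((Finset.Ioc (θ.k j) (θ.k (j + 1))).filter fun i => ε ≤ |x i - 0|).card : ℝ) := by
    rw [hS0def, Finset.range_eq_Ico, Finset.range_eq_Ico]
    exact (Finset.sum_Ico_consecutive _ (Nat.zero_le R) (by omega)).symm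
  have htail : ∑ j ∈ Finset.Ico R (r + 1),
      (((Finset.Ioc (θ.k j) (θ.k (j + 1))).filter fun i => ε ≤ |x i - 0|).card : ℝ) ≤
      δ' * (θ.k (r + 1) : ℝ) := by
    calc _ ≤ ∑ j ∈ Finset.Ico R (r + 1), δ' * ((θ.k (j + 1) - θ.k j : ℕ) : ℝ) := by
          apply Finset.sum_le_sum
          intro j hj
          exact hBle j (le_trans (le_max_left _ _) (Finset.mem_Ico.1 hj).1)
      _ ≤ ∑ j ∈ Finset.range (r + 1), δ' * ((θ.k (j + 1) - θ.k j : ℕ) : ℝ) := by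
          apply Finset.sum_le_sum_of_subset_of_nonneg
          · rw [Finset.range_eq_Ico]; exact Finset.Ico_subset_Ico (Nat.zero_le _) le_rfl
          · intro j _ _; positivity
      _ = δ' * ∑ j ∈ Finset.range (r + 1), ((θ.k (j + 1) - θ.k j : ℕ) : ℝ) := by
          rw [Finset.mul_sum]
      _ = δ' * (θ.k (r + 1) : ℝ) := by
          rw [← Nat.cast_sum]
          rw [sum_h θ (r + 1)]
  -- k (r+1) ≤ H * k r ≤ H * n
  have hr1le : R1 ≤ r := le_trans (le_trans (le_max_left _ _) (le_max_right R0 _)) hRr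
  have hrone : 1 ≤ r := le_trans (le_trans (le_max_right _ _) (le_max_right R0 _)) hRr
  have hkrpos : (0:ℝ) < (θ.k r : ℝ) := by
    have : 1 ≤ θ.k r := le_trans hrone (k_ge θ r)
    exact_mod_cast this
  have hkH : (θ.k (r + 1) : ℝ) ≤ H * (θ.k r : ℝ) := by
    have := hR1 r hr1le
    rw [div_le_iff₀ hkrpos] at this
    linarith
  have hkn : (θ.k (r + 1) : ℝ) ≤ H * (n : ℝ) := by
    have : (θ.k r : ℝ) ≤ n := by exact_mod_cast hkrn.le
    nlinarith
  -- finish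
  have hnR : (0:ℝ) < (n:ℝ) := by exact_mod_cast hnpos
  have hfinal : (((Finset.range n).filter fun i => ε ≤ |x i - 0|).card : ℝ) ≤
      (1 + S0) + δ' * H * (n : ℝ) := by
    have := hcount
    rw [hsplit] at this
    have h4 : δ' * (θ.k (r + 1) : ℝ) ≤ δ' * (H * n) := by
      apply mul_le_mul_of_nonneg_left hkn hδ'.le
    nlinarith [htail]
  rw [Real.norm_eq_abs, abs_of_nonneg (by positivity), div_lt_iff₀ hnR]
  have hδ'H : δ' * H = δ / 2 := by
    rw [hδ'def]; field_simp
  rw [div_lt_iff₀ hnR] at hn2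
  nlinarith [hfinal]

set_option maxHeartbeats 1000000 in
lemma P3 (θ : Lacunary) (hL : ¬ LiminfQGtOne θ) :
    ∃ x : ℕ → ℝ, StatConvTo x 0 ∧ ¬ LacStatConvTo θ x 0 := by
  have key : ∀ j N : ℕ, ∃ r, N ≤ r ∧ 1 ≤ θ.k r ∧
      ((j : ℝ) + 1) * θ.k (r + 1) ≤ ((j : ℝ) + 2) * θ.k r := by
    intro j N
    rw [LiminfQGtOne] at hL
    push_neg at hL
    have hj0 : (0:ℝ) < 1 / ((j:ℝ) + 1) := by positivity
    have ha := hL (1 + 1 / ((j : ℝ) + 1)) (by linarith)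
    obtain ⟨r, hrN, hr⟩ := Filter.frequently_atTop.mp ha (max N 1)
    have hkr1 : 1 ≤ θ.k r := le_trans (le_trans (le_max_right N 1) hrN) (k_ge θ r)
    have hkrpos : (0:ℝ) < (θ.k r : ℝ) := by exact_mod_cast hkr1
    rw [div_lt_iff₀ hkrpos] at hr
    refine ⟨r, le_trans (le_max_left N 1) hrN, hkr1, ?_⟩
    have hjne : ((j:ℝ)+1) ≠ 0 := by positivity
    have e2 : ((j:ℝ)+1) * ((1 + 1/((j:ℝ)+1)) * (θ.k r : ℝ)) = ((j:ℝ)+2) * (θ.k r : ℝ) := by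
      field_simp
      ring
    nlinarith [mul_le_mul_of_nonneg_left hr.le (show (0:ℝ) ≤ (j:ℝ)+1 by positivity), e2]
  obtain ⟨s, hsA, hmono, hsB⟩ : ∃ s : ℕ → ℕ,
      (∀ j, 1 ≤ θ.k (s j) ∧
        ((j : ℝ) + 1) * θ.k (s j + 1) ≤ ((j : ℝ) + 2) * θ.k (s j)) ∧
      (∀ j, s j < s (j + 1)) ∧
      (∀ j, (j + 1) * θ.k (s j + 1) ≤ θ.k (s (j + 1))) := by
    choose f hf using key
    refine ⟨fun j =>
      Nat.rec (f 0 1) (fun j sj => f (j + 1) (max ((j + 1) * θ.k (sj + 1)) (sj + 1))) j,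
      ?_, ?_, ?_⟩
    · intro j
      cases j with
      | zero => exact ⟨(hf 0 1).2.1, (hf 0 1).2.2⟩
      | succ j => exact ⟨(hf _ _).2.1, (hf _ _).2.2⟩
    · intro j
      have := (hf (j + 1) (max ((j + 1) * θ.k (Nat.rec (f 0 1)
        (fun j sj => f (j + 1) (max ((j + 1) * θ.k (sj + 1)) (sj + 1))) j + 1))
        (Nat.rec (f 0 1) (fun j sj => f (j + 1) (max ((j + 1) * θ.k (sj + 1)) (sj + 1))) j + 1))).1
      have h2 := le_max_right ((j + 1) * θ.k (Nat.rec (f 0 1)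
        (fun j sj => f (j + 1) (max ((j + 1) * θ.k (sj + 1)) (sj + 1))) j + 1))
        (Nat.rec (f 0 1) (fun j sj => f (j + 1) (max ((j + 1) * θ.k (sj + 1)) (sj + 1))) j + 1)
      exact lt_of_lt_of_le (Nat.lt_of_lt_of_le (Nat.lt_succ_self _) h2) this
    · intro j
      have h1 := (hf (j + 1) (max ((j + 1) * θ.k (Nat.rec (f 0 1)
        (fun j sj => f (j + 1) (max ((j + 1) * θ.k (sj + 1)) (sj + 1))) j + 1))
        (Nat.rec (f 0 1) (fun j sj => f (j + 1) (max ((j + 1) * θ.k (sj + 1)) (sj + 1))) j + 1))).1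
      exact le_trans (le_max_left _ _) (le_trans h1 (k_ge θ _))
  have hsmono : StrictMono s := strictMono_nat_of_lt_succ hmono
  obtain ⟨x, hx1, hx0⟩ : ∃ x : ℕ → ℝ,
      (∀ i, (∃ j, θ.k (s j) < i ∧ i ≤ θ.k (s j + 1)) → x i = 1) ∧
      (∀ i, ¬ (∃ j, θ.k (s j) < i ∧ i ≤ θ.k (s j + 1)) → x i = 0) :=
    ⟨fun i => if ∃ j, θ.k (s j) < i ∧ i ≤ θ.k (s j + 1) then (1:ℝ) else 0,
      fun i h => if_pos h, fun i h => if_neg h⟩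
  refine ⟨x, ?_, ?_⟩
  · -- statistically convergent to 0
    intro ε hε
    rw [NormedAddCommGroup.tendsto_nhds_zero]
    intro δ hδ
    obtain ⟨J, hJ⟩ := exists_nat_one_div_lt (show (0:ℝ) < δ/3 by linarith)
    have hJ3 : 3 / ((J:ℝ) + 1) < δ := by
      rw [div_lt_iff₀ (by positivity)]
      rw [div_lt_iff₀ (by positivity)] at hJ
      linarith
    filter_upwards [eventually_gt_atTop (θ.k (s (J + 1)))] with n hn
    have hnpos : 0 < n := lt_of_le_of_lt (Nat.zero_le _) hn
    have hex : ∃ m, n ≤ θ.k (s m) := ⟨n, le_trans hsmono.le_apply (k_ge θ (s n))⟩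
    have hm := Nat.find_spec hex
    have hmge : J + 2 ≤ Nat.find hex := by
      by_contra hlt
      push_neg at hlt
      have hle : Nat.find hex ≤ J + 1 := by omega
      have := le_trans hm (k_mono θ (hsmono.monotone hle))
      omega
    obtain ⟨i, hi⟩ : ∃ i, Nat.find hex = i + 2 := ⟨Nat.find hex - 2, by omega⟩
    have hJi : J ≤ i := by omega
    have hlow : θ.k (s (i + 1)) < n := by
      have := Nat.find_min hex (m := i + 1) (by omega)
      omega
    have hhigh : n ≤ θ.k (s (i + 2)) := by rw [hi] at hm; exact hm
    -- subset claim
    have hsub : (Finset.range n).filter (fun idx => ε ≤ |x idx - 0|) ⊆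
        Finset.range (θ.k (s i + 1) + 1) ∪
          Finset.Ioc (θ.k (s (i + 1))) (θ.k (s (i + 1) + 1)) := by
      intro idx hidx
      rw [Finset.mem_filter, Finset.mem_range] at hidx
      have hone : ∃ j, θ.k (s j) < idx ∧ idx ≤ θ.k (s j + 1) := by
        by_contra hno
        have hz : x idx = 0 := hx0 idx hno
        rw [hz] at hidx
        simp at hidx
        linarith [hidx.2]
      obtain ⟨j, hj1, hj2⟩ := hone
      rcases lt_trichotomy j (i + 1) with h | h | h
      · refine Finset.mem_union_left _ (Finset.mem_range.2 ?_)
        have : s j + 1 ≤ s i + 1 := by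
          have h9 : s j ≤ s i := hsmono.monotone (show j ≤ i by omega)
          omega
        exact Nat.lt_succ_of_le (le_trans hj2 (k_mono θ this))
      · subst h
        exact Finset.mem_union_right _ (Finset.mem_Ioc.2 ⟨hj1, hj2⟩)
      · exfalso
        have h9 : θ.k (s (i + 2)) ≤ θ.k (s j) := k_mono θ (hsmono.monotone (show i + 2 ≤ j by omega))
        omega
    have hcard : ((Finset.range n).filter (fun idx => ε ≤ |x idx - 0|)).card ≤
        (θ.k (s i + 1) + 1) + (θ.k (s (i + 1) + 1) - θ.k (s (i + 1))) := by
      refine le_trans (Finset.card_le_card hsub) (le_trans (Finset.card_union_le _ _) ?_)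
      rw [Finset.card_range, Nat.card_Ioc]
    -- real arithmetic
    rw [Real.norm_eq_abs, abs_of_nonneg (by positivity), div_lt_iff₀ (by exact_mod_cast hnpos)]
    set K : ℝ := (θ.k (s (i + 1)) : ℝ) with hK
    set A : ℝ := (θ.k (s i + 1) : ℝ) with hA
    set B : ℝ := (θ.k (s (i + 1) + 1) : ℝ) with hB
    have hBK : K ≤ B := by
      rw [hK, hB]; exact_mod_cast k_mono θ (Nat.le_succ _)
    have hcardR : (((Finset.range n).filter (fun idx => ε ≤ |x idx - 0|)).card : ℝ) ≤
        A + 1 + (B - K) := by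
      have hsubNat : (θ.k (s (i+1) + 1) - θ.k (s (i+1)) : ℕ) =
          θ.k (s (i+1) + 1) - θ.k (s (i+1)) := rfl
      have : ((θ.k (s i + 1) + 1 + (θ.k (s (i + 1) + 1) - θ.k (s (i + 1))) : ℕ) : ℝ) =
          A + 1 + (B - K) := by
        push_cast [Nat.cast_sub (k_mono θ (Nat.le_succ (s (i+1))))]
        ring
      rw [← this]
      exact_mod_cast hcard
    have h1 : ((i:ℝ) + 1) * A ≤ K := by
      have := hsB i
      rw [hK, hA]
      exact_mod_cast this
    have h2 : ((i:ℝ) + 2) * B ≤ ((i:ℝ) + 3) * K := by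
      have h := (hsA (i + 1)).2
      push_cast at h
      rw [hK, hB]
      linarith
    have h3 : (i:ℝ) + 1 ≤ K := by
      rw [hK]
      have : i + 1 ≤ θ.k (s (i+1)) := le_trans hsmono.le_apply (k_ge θ _)
      exact_mod_cast this
    have h4 : K < (n:ℝ) := by rw [hK]; exact_mod_cast hlow
    have h5 : 3 < δ * ((i:ℝ) + 1) := by
      rw [div_lt_iff₀ (by positivity)] at hJ3
      have : δ * ((J:ℝ) + 1) ≤ δ * ((i:ℝ) + 1) := by
        apply mul_le_mul_of_nonneg_left _ hδ.le
        have : (J:ℝ) ≤ i := by exact_mod_cast hJi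
        linarith
      linarith
    have hKpos : (0:ℝ) < K := by linarith [h3]
    have hip : (0:ℝ) < (i:ℝ) + 1 := by positivity
    have hcnn : (0:ℝ) ≤ (((Finset.range n).filter (fun idx => ε ≤ |x idx - 0|)).card : ℝ) := by
      exact Nat.cast_nonneg _
    generalize hgen : (((Finset.range n).filter (fun idx => ε ≤ |x idx - 0|)).card : ℝ) = c
      at hcardR hcnn ⊢
    have c1 : ((i:ℝ) + 1) * c ≤ 3 * K := by
      nlinarith [mul_le_mul_of_nonneg_left hcardR hip.le, h1, h2, h3, hBK]
    have c2 : 3 * K < δ * (((i:ℝ) + 1) * (n:ℝ)) := by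
      have e1 : 3 * K < δ * ((i:ℝ) + 1) * K := by nlinarith
      have e2 : δ * ((i:ℝ) + 1) * K ≤ δ * ((i:ℝ) + 1) * (n:ℝ) := by nlinarith
      linarith
    have := lt_of_mul_lt_mul_left (show ((i:ℝ)+1) * c < ((i:ℝ)+1) * (δ * (n:ℝ)) by linarith)
      hip.le
    linarith
  · -- not lacunarily statistically convergent to 0
    intro hcon
    have h1 := (NormedAddCommGroup.tendsto_nhds_zero.mp (hcon 1 one_pos)) (1/2) (by norm_num)
    obtain ⟨N, hN⟩ := eventually_atTop.1 h1
    have hsN : N ≤ s N := hsmono.le_apply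
    have := hN (s N) hsN
    have hfull : ((Finset.Ioc (θ.k (s N)) (θ.k (s N + 1))).filter
        fun i => (1:ℝ) ≤ |x i - 0|) = Finset.Ioc (θ.k (s N)) (θ.k (s N + 1)) := by
      apply Finset.filter_true_of_mem
      intro i hi
      rw [Finset.mem_Ioc] at hi
      have : x i = 1 := hx1 i ⟨N, hi.1, hi.2⟩
      rw [this]
      simp
    rw [hfull] at this
    rw [Nat.card_Ioc] at this
    have hp : (0:ℝ) < ((θ.k (s N + 1) - θ.k (s N) : ℕ) : ℝ) := by exact_mod_cast h_pos θ (s N)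
    rw [div_self (ne_of_gt hp)] at this
    norm_num at this

set_option maxHeartbeats 1000000 in
lemma P4 (θ : Lacunary) (hH : ¬ LimsupQLtTop θ) :
    ∃ x : ℕ → ℝ, LacStatConvTo θ x 0 ∧ ¬ StatConvTo x 0 := by
  have key : ∀ j N : ℕ, ∃ r, N ≤ r ∧ 1 ≤ θ.k r ∧
      ((j : ℝ) + 3) * θ.k r < θ.k (r + 1) := by
    intro j N
    rw [LimsupQLtTop] at hH
    push_neg at hH
    have ha := hH ((j : ℝ) + 3)
    obtain ⟨r, hrN, hr⟩ := Filter.frequently_atTop.mp ha N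
    have hkr1 : 1 ≤ θ.k r := by
      by_contra hk
      have : θ.k r = 0 := by omega
      rw [this] at hr
      norm_num at hr
      linarith [hr, (show (0:ℝ) ≤ (j:ℝ) by positivity)]
    have hkrpos : (0:ℝ) < (θ.k r : ℝ) := by exact_mod_cast hkr1
    rw [lt_div_iff₀ hkrpos] at hr
    exact ⟨r, hrN, hkr1, hr⟩
  obtain ⟨s, hsA, hmono⟩ : ∃ s : ℕ → ℕ,
      (∀ j, 1 ≤ θ.k (s j) ∧ ((j : ℝ) + 3) * θ.k (s j) < θ.k (s j + 1)) ∧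
      (∀ j, s j < s (j + 1)) := by
    choose f hf using key
    refine ⟨fun j => Nat.rec (f 0 0) (fun jj sj => f (jj + 1) (sj + 1)) j, ?_, ?_⟩
    · intro j
      cases j with
      | zero => exact ⟨(hf 0 0).2.1, (hf 0 0).2.2⟩
      | succ j => exact ⟨(hf _ _).2.1, (hf _ _).2.2⟩
    · intro j
      have h := (hf (j + 1) (Nat.rec (f 0 0) (fun jj sj => f (jj + 1) (sj + 1)) j + 1)).1
      simp only []
      omega
  have hsmono : StrictMono s := strictMono_nat_of_lt_succ hmono
  have h2k : ∀ j, 2 * θ.k (s j) < θ.k (s j + 1) := by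
    intro j
    have h1 := (hsA j).1
    have h2 := (hsA j).2
    have : (2 * θ.k (s j) : ℝ) < θ.k (s j + 1) := by
      have : (1:ℝ) ≤ (θ.k (s j) : ℝ) := by exact_mod_cast h1
      nlinarith [(show (0:ℝ) ≤ (j:ℝ) by positivity)]
    exact_mod_cast this
  obtain ⟨x, hx1, hx0⟩ : ∃ x : ℕ → ℝ,
      (∀ i, (∃ j, θ.k (s j) < i ∧ i ≤ 2 * θ.k (s j)) → x i = 1) ∧
      (∀ i, ¬ (∃ j, θ.k (s j) < i ∧ i ≤ 2 * θ.k (s j)) → x i = 0) :=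
    ⟨fun i => if ∃ j, θ.k (s j) < i ∧ i ≤ 2 * θ.k (s j) then (1:ℝ) else 0,
      fun i h => if_pos h, fun i h => if_neg h⟩
  refine ⟨x, ?_, ?_⟩
  · -- lacunarily statistically convergent to 0
    intro ε hε
    rw [NormedAddCommGroup.tendsto_nhds_zero]
    intro δ hδ
    obtain ⟨J, hJ⟩ := exists_nat_one_div_lt hδ
    filter_upwards [eventually_gt_atTop (s J)] with r hr
    by_cases hcase : ∃ j, s j = r
    · obtain ⟨j, hj⟩ := hcase
      have hjJ : J < j := by
        by_contra hle
        push_neg at hle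
        have := hsmono.monotone hle
        omega
      -- the ones inside block r are in Ioc (k (s j)) (2 k (s j))
      have hsub : (Finset.Ioc (θ.k r) (θ.k (r + 1))).filter (fun i => ε ≤ |x i - 0|) ⊆
          Finset.Ioc (θ.k (s j)) (2 * θ.k (s j)) := by
        intro i hi
        rw [Finset.mem_filter] at hi
        have hone : ∃ j', θ.k (s j') < i ∧ i ≤ 2 * θ.k (s j') := by
          by_contra hno
          have hz : x i = 0 := hx0 i hno
          rw [hz] at hi
          simp at hi
          linarith [hi.2]
        obtain ⟨j', hj'⟩ := hone
        have hiIoc : i ∈ Finset.Ioc (θ.k (s j')) (θ.k (s j' + 1)) :=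
          Finset.mem_Ioc.2 ⟨hj'.1, le_trans hj'.2 (le_of_lt (h2k j'))⟩
        have hiIoc2 : i ∈ Finset.Ioc (θ.k (s j)) (θ.k (s j + 1)) := by rw [hj]; exact hi.1
        have hj'j : j' = j := hsmono.injective (Ioc_disj θ hiIoc hiIoc2)
        rw [← hj'j]
        exact Finset.mem_Ioc.2 hj'
      have hcard : ((Finset.Ioc (θ.k r) (θ.k (r + 1))).filter
          (fun i => ε ≤ |x i - 0|)).card ≤ θ.k (s j) := by
        refine le_trans (Finset.card_le_card hsub) ?_
        rw [Nat.card_Ioc]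
        omega
      rw [Real.norm_eq_abs, abs_of_nonneg (by positivity)]
      have hhpos : (0:ℝ) < ((θ.k (r + 1) - θ.k r : ℕ) : ℝ) := by exact_mod_cast h_pos θ r
      rw [div_lt_iff₀ hhpos]
      have hkpos : (0:ℝ) < (θ.k (s j) : ℝ) := by exact_mod_cast (hsA j).1
      have hhge : ((j:ℝ) + 2) * θ.k (s j) < ((θ.k (r + 1) - θ.k r : ℕ) : ℝ) := by
        rw [Nat.cast_sub (k_mono θ (Nat.le_succ r)), ← hj]
        have := (hsA j).2
        linarith
      have hcR : (((Finset.Ioc (θ.k r) (θ.k (r + 1))).filter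
          (fun i => ε ≤ |x i - 0|)).card : ℝ) ≤ θ.k (s j) := by exact_mod_cast hcard
      have hδj : 1 < δ * ((j:ℝ) + 2) := by
        rw [div_lt_iff₀ (by positivity)] at hJ
        have hJj : (J:ℝ) + 1 ≤ (j:ℝ) + 2 := by
          have : (J:ℝ) ≤ j := by exact_mod_cast hjJ.le
          linarith
        nlinarith
      nlinarith [mul_lt_mul_of_pos_left hhge hδ]
    · -- block contains no ones
      have hempty : (Finset.Ioc (θ.k r) (θ.k (r + 1))).filter (fun i => ε ≤ |x i - 0|) = ∅ := by
        rw [Finset.filter_eq_empty_iff]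
        intro i hi
        intro hcontra
        have hone : ∃ j', θ.k (s j') < i ∧ i ≤ 2 * θ.k (s j') := by
          by_contra hno
          have hz : x i = 0 := hx0 i hno
          rw [hz] at hcontra
          simp at hcontra
          linarith
        obtain ⟨j', hj'⟩ := hone
        have hiIoc : i ∈ Finset.Ioc (θ.k (s j')) (θ.k (s j' + 1)) :=
          Finset.mem_Ioc.2 ⟨hj'.1, le_trans hj'.2 (le_of_lt (h2k j'))⟩
        exact hcase ⟨j', Ioc_disj θ hiIoc hi⟩
      rw [hempty]
      simpa using hδ
  · -- not statistically convergent to 0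
    intro hcon
    have h1 := (NormedAddCommGroup.tendsto_nhds_zero.mp (hcon 1 one_pos)) (1/3) (by norm_num)
    obtain ⟨N, hN⟩ := eventually_atTop.1 h1
    set n : ℕ := 2 * θ.k (s N) + 1 with hn
    have hnN : N ≤ n := by
      have h1 : N ≤ s N := hsmono.le_apply
      have h2 := k_ge θ (s N)
      omega
    have := hN n hnN
    have hsub : Finset.Ioc (θ.k (s N)) (2 * θ.k (s N)) ⊆
        (Finset.range n).filter (fun i => (1:ℝ) ≤ |x i - 0|) := by
      intro i hi
      rw [Finset.mem_Ioc] at hi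
      rw [Finset.mem_filter, Finset.mem_range]
      refine ⟨by omega, ?_⟩
      have : x i = 1 := hx1 i ⟨N, hi.1, hi.2⟩
      rw [this]
      simp
    have hcard : θ.k (s N) ≤ ((Finset.range n).filter (fun i => (1:ℝ) ≤ |x i - 0|)).card := by
      have := Finset.card_le_card hsub
      rw [Nat.card_Ioc] at this
      omega
    have hkpos : (0:ℝ) < (θ.k (s N) : ℝ) := by exact_mod_cast (hsA N).1
    have hnpos : (0:ℝ) < (n : ℝ) := by positivity
    rw [Real.norm_eq_abs, abs_of_nonneg (by positivity), div_lt_iff₀ hnpos] at this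
    have hcR : (θ.k (s N) : ℝ) ≤
        (((Finset.range n).filter (fun i => (1:ℝ) ≤ |x i - 0|)).card : ℝ) := by
      exact_mod_cast hcard
    have hnR : (n : ℝ) = 2 * (θ.k (s N) : ℝ) + 1 := by rw [hn]; push_cast; ring
    rw [hnR] at this
    have hk1 : (1:ℝ) ≤ (θ.k (s N) : ℝ) := by exact_mod_cast (hsA N).1
    nlinarith

lemma diff_partialSum (x : ℕ → ℝ) :
    (fun n => (∑ i ∈ Finset.range (n + 1), x i) - ∑ i ∈ Finset.range n, x i) = x := by
  funext n; rw [Finset.sum_range_succ]; ring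

end LacAux

theorem statQC_eq_lacStatQC_iff (θ : Lacunary) :
    (∀ a : ℕ → ℝ, StatQC a ↔ LacStatQC θ a) ↔ (LiminfQGtOne θ ∧ LimsupQLtTop θ) := by
  constructor
  · intro hall
    by_contra hc
    rw [not_and_or] at hc
    rcases hc with hc | hc
    · obtain ⟨x, hx1, hx2⟩ := LacAux.P3 θ hc
      have := (hall fun n => ∑ i ∈ Finset.range n, x i).mp
      rw [StatQC, LacStatQC, LacAux.diff_partialSum] at this
      exact hx2 (this hx1)
    · obtain ⟨x, hx1, hx2⟩ := LacAux.P4 θ hc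
      have := (hall fun n => ∑ i ∈ Finset.range n, x i).mpr
      rw [StatQC, LacStatQC, LacAux.diff_partialSum] at this
      exact hx2 (this hx1)
  · rintro ⟨h1, h2⟩ a
    exact ⟨fun h => LacAux.P1 θ h1 _ h, fun h => LacAux.P2 θ h2 _ h⟩
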